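/- Every 1-recognizable subset of ℕ^d is semi-linear, but for d = 2 the converse fails: {(n, 2n) : n ∈ ℕ} is semi-linear but not 1-recognizable. -/

import Mathlib

/-- The padded unary representation of `(n₁, …, n_d) ∈ ℕ^d` as a word over
`({a} ∪ {#})^d`, letters encoded as functions `Fin d → Bool` (`true` = `a`, `false` = `#`). -/
def padRep (d : ℕ) (v : Fin d → ℕ) : List (Fin d → Bool) :=
  List.ofFn (fun j : Fin (Finset.univ.sup v) => fun i => decide ((j : ℕ) < v i))

/-- `X ⊆ ℕ^d` is `1`-recognizable. -/
def OneRecognizable (d : ℕ) (X : Set (Fin d → ℕ)) : Prop :=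
  Language.IsRegular {w : List (Fin d → Bool) | ∃ v ∈ X, w = padRep d v}

/--  is a linear set. -/
def LinearSet (d : ℕ) (X : Set (Fin d → ℕ)) : Prop :=
  ∃ (v₀ : Fin d → ℕ) (t : ℕ) (v : Fin t → Fin d → ℕ),
    X = {x : Fin d → ℕ | ∃ n : Fin t → ℕ, x = v₀ + ∑ i, n i • v i}

/--  is a semi-linear set: a finite union of linear sets. -/
def SemiLinearSet (d : ℕ) (X : Set (Fin d → ℕ)) : Prop :=
  ∃ (k : ℕ) (Y : Fin k → Set (Fin d → ℕ)), (∀ i, LinearSet d (Y i)) ∧ X = ⋃ i, Y i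

namespace S17

def AP (a p : ℕ) : Set ℕ := {m | ∃ n, m = a + n * p}

lemma semiLinearSet_empty (d : ℕ) : SemiLinearSet d ∅ :=
  ⟨0, fun _ => ∅, fun i => i.elim0, by simp⟩

lemma semiLinearSet_of_linear {d : ℕ} {X : Set (Fin d → ℕ)} (h : LinearSet d X) :
    SemiLinearSet d X :=
  ⟨1, fun _ => X, fun _ => h, (Set.iUnion_const X).symm⟩

lemma semiLinearSet_iUnion {d : ℕ} {ι : Type} [Fintype ι] (Y : ι → Set (Fin d → ℕ))
    (h : ∀ i, SemiLinearSet d (Y i)) : SemiLinearSet d (⋃ i, Y i) := by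
  choose k Z hZ hYZ using h
  let e : (Σ i : ι, Fin (k i)) ≃ Fin (∑ i, k i) := Fintype.equivFinOfCardEq (by simp)
  refine ⟨∑ i, k i, fun j => Z (e.symm j).1 (e.symm j).2, fun j => hZ _ _, ?_⟩
  ext x
  simp only [Set.mem_iUnion]
  constructor
  · rintro ⟨i, hx⟩
    rw [hYZ i] at hx
    rcases Set.mem_iUnion.1 hx with ⟨j, hj⟩
    refine ⟨e ⟨i, j⟩, ?_⟩
    rw [Equiv.symm_apply_apply]
    exact hj
  · rintro ⟨j, hj⟩
    exact ⟨(e.symm j).1, by rw [hYZ]; exact Set.mem_iUnion.2 ⟨(e.symm j).2, hj⟩⟩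

lemma linearSet_pi {e : ℕ} (a p : Fin e → ℕ) :
    LinearSet e {m : Fin e → ℕ | ∀ k, m k ∈ AP (a k) (p k)} := by
  refine ⟨a, e, fun k => fun i => if i = k then p k else 0, ?_⟩
  have key : ∀ (n : Fin e → ℕ) (i : Fin e),
      (a + ∑ k, n k • fun i' => if i' = k then p k else 0) i = a i + n i * p i := by
    intro n i
    rw [Pi.add_apply, Finset.sum_apply]
    simp [Finset.sum_ite_eq', mul_comm]
  ext m
  simp only [Set.mem_setOf_eq, AP]
  constructor
  · intro h
    refine ⟨fun k => (h k).choose, ?_⟩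
    funext i
    rw [key, ← (h i).choose_spec]
  · rintro ⟨n, rfl⟩ k
    exact ⟨n k, key n k⟩

lemma linearSet_image {e d : ℕ} (A : (Fin e → ℕ) →+ (Fin d → ℕ)) {Y : Set (Fin e → ℕ)}
    (hY : LinearSet e Y) : LinearSet d (A '' Y) := by
  obtain ⟨v₀, t, v, rfl⟩ := hY
  refine ⟨A v₀, t, fun i => A (v i), ?_⟩
  ext x
  constructor
  · rintro ⟨y, ⟨n, rfl⟩, rfl⟩
    exact ⟨n, by simp only [map_add, map_sum, map_nsmul]⟩
  · rintro ⟨n, rfl⟩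
    exact ⟨v₀ + ∑ i, n i • v i, ⟨n, rfl⟩, by simp only [map_add, map_sum, map_nsmul]⟩

lemma semiLinearSet_image {e d : ℕ} (A : (Fin e → ℕ) →+ (Fin d → ℕ)) {Y : Set (Fin e → ℕ)}
    (hY : SemiLinearSet e Y) : SemiLinearSet d (A '' Y) := by
  obtain ⟨k, Z, hZ, rfl⟩ := hY
  rw [Set.image_iUnion]
  exact semiLinearSet_iUnion _ fun i => semiLinearSet_of_linear (linearSet_image A (hZ i))


variable {β γ : Type*}

def wordOf (c : List (ℕ × β)) : List β := (c.map fun p => List.replicate p.1 p.2).flatten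

def pick [Inhabited β] : List (ℕ × β) → ℕ → β
  | [], _ => default
  | p :: c, j => if j < p.1 then p.2 else pick c (j - p.1)

lemma wordOf_cons (p : ℕ × β) (c : List (ℕ × β)) :
    wordOf (p :: c) = List.replicate p.1 p.2 ++ wordOf c := by
  simp [wordOf]

lemma length_wordOf (c : List (ℕ × β)) : (wordOf c).length = (c.map Prod.fst).sum := by
  induction c with
  | nil => rfl
  | cons p c ih => simp [wordOf_cons, ih]

lemma getElem_wordOf [Inhabited β] (c : List (ℕ × β)) (j : ℕ) (h : j < (wordOf c).length) :
    (wordOf c)[j] = pick c j := by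
  induction c generalizing j with
  | nil => simp [wordOf] at h
  | cons p c ih =>
    rw [List.getElem_of_eq (wordOf_cons p c)]
    rw [wordOf_cons] at h
    by_cases hj : j < p.1
    · rw [List.getElem_append_left (by simpa using hj)]
      simp [pick, hj]
    · push_neg at hj
      rw [List.getElem_append_right (by simpa using hj)]
      simp only [List.length_replicate]
      rw [ih]
      simp [pick, hj, Nat.not_lt.2 hj]

lemma pick_map [Inhabited β] [Inhabited γ] (φ : β → γ) (c : List (ℕ × β)) (j : ℕ)
    (h : j < (c.map Prod.fst).sum) :
    pick (c.map fun p => (p.1, φ p.2)) j = φ (pick c j) := by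
  induction c generalizing j with
  | nil => simp at h
  | cons p c ih =>
    simp only [List.map_cons, pick]
    by_cases hj : j < p.1
    · simp [hj]
    · simp only [if_neg hj]
      apply ih
      simp only [List.map_cons, List.sum_cons] at h
      omega

lemma evalFrom_replicate {α Q : Type*} (M : DFA α Q) (a : α) :
    ∀ (n : ℕ) (s : Q), M.evalFrom s (List.replicate n a) = (fun u => M.step u a)^[n] s := by
  intro n
  induction n with
  | zero => intro s; rfl
  | succ n ih =>
    intro s
    rw [List.replicate_succ, Function.iterate_succ_apply]
    exact ih (M.step s a)

lemma evalFrom_wordOf {α Q : Type*} (M : DFA α Q) :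
    ∀ (c : List (ℕ × α)) (s : Q),
      M.evalFrom s (wordOf c) = c.foldl (fun t p => (fun u => M.step u p.2)^[p.1] t) s := by
  intro c
  induction c with
  | nil => intro s; rfl
  | cons p c ih =>
    intro s
    rw [wordOf_cons, DFA.evalFrom_of_append, evalFrom_replicate, List.foldl_cons, ih]

lemma pick_ofFn_decide (e : ℕ) :
    ∀ (m : ℕ → ℕ) (r j : ℕ), j < ∑ t ∈ Finset.range e, m t →
      pick (List.ofFn fun k : Fin e => (m (k : ℕ), decide ((k : ℕ) < r))) j
        = decide (j < ∑ t ∈ Finset.range (min r e), m t) := by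
  induction e with
  | zero => intro m r j h; simp at h
  | succ e ih =>
    intro m r j h
    rw [List.ofFn_succ]
    show pick ((m 0, decide (0 < r)) :: List.ofFn fun i : Fin e => (m ((i : ℕ) + 1), decide ((i : ℕ) + 1 < r))) j = _
    simp only [pick, Fin.val_zero, Fin.val_succ]
    by_cases hj : j < m 0
    · simp only [hj, ↓reduceIte]
      rcases Nat.eq_zero_or_pos r with rfl | hr
      · simp
      · have h1 : 1 ≤ min r (e + 1) := by omega
        have hle : m 0 ≤ ∑ t ∈ Finset.range (min r (e + 1)), m t := by
          calc m 0 = ∑ t ∈ Finset.range 1, m t := by simp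
          _ ≤ _ := Finset.sum_le_sum_of_subset (Finset.range_subset_range.2 h1)
        simp only [decide_eq_decide]
        constructor
        · intro; omega
        · intro; omega
    · simp only [hj, ↓reduceIte]
      push_neg at hj
      have hsum : ∑ t ∈ Finset.range (e + 1), m t
          = ∑ t ∈ Finset.range e, m (t + 1) + m 0 := Finset.sum_range_succ' m e
      have hfun : (fun k : Fin e => (m ((k : ℕ) + 1), decide ((k : ℕ) + 1 < r)))
          = fun k : Fin e => ((fun t => m (t + 1)) (k : ℕ), decide ((k : ℕ) < r - 1)) := by
        funext k
        refine Prod.ext rfl ?_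
        simp only [decide_eq_decide]
        omega
      rw [hfun, ih (fun t => m (t + 1)) (r - 1) (j - m 0) (show j - m 0 < ∑ t ∈ Finset.range e, m (t + 1) by omega)]
      rcases Nat.eq_zero_or_pos r with rfl | hr
      · simp
      · have hmin : min r (e + 1) = min (r - 1) e + 1 := by omega
        have hsum2 : ∑ t ∈ Finset.range (min (r - 1) e + 1), m t
            = ∑ t ∈ Finset.range (min (r - 1) e), m (t + 1) + m 0 :=
          Finset.sum_range_succ' m _
        rw [hmin, hsum2]
        simp only [decide_eq_decide]
        omega

lemma foldl_chain {Q : Type*} :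
    ∀ (e : ℕ) (G : Fin e → Q → Q) (s r : Q),
      ((List.ofFn G).foldl (fun t g => g t) s = r ↔
        ∃ q : Fin (e + 1) → Q, q 0 = s ∧ q (Fin.last e) = r ∧
          ∀ k : Fin e, G k (q k.castSucc) = q k.succ) := by
  intro e
  induction e with
  | zero =>
    intro G s r
    simp only [List.ofFn_zero, List.foldl_nil]
    constructor
    · rintro rfl
      exact ⟨fun _ => s, rfl, rfl, fun k => k.elim0⟩
    · rintro ⟨q, h0, hl, _⟩
      rw [← h0, ← hl]
      rfl
  | succ e ih =>
    intro G s r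
    rw [List.ofFn_succ, List.foldl_cons, ih]
    constructor
    · rintro ⟨q', h0, hl, hst⟩
      refine ⟨Fin.cons s q', Fin.cons_zero _ _, ?_, ?_⟩
      · rw [← Fin.succ_last, Fin.cons_succ]
        exact hl
      · intro k
        induction k using Fin.cases with
        | zero =>
          rw [Fin.castSucc_zero, Fin.cons_zero, Fin.cons_succ]
          exact h0.symm
        | succ k =>
          rw [← Fin.succ_castSucc, Fin.cons_succ, Fin.cons_succ]
          exact hst k
    · rintro ⟨q, h0, hl, hst⟩
      refine ⟨fun k => q k.succ, ?_, ?_, ?_⟩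
      · have := hst 0
        rw [Fin.castSucc_zero, h0] at this
        exact this.symm
      · show q (Fin.last e).succ = r
        rw [Fin.succ_last]
        exact hl
      · intro k
        have := hst k.succ
        rw [← Fin.succ_castSucc] at this
        exact this


/-- Extension of a `Fin d`-tuple by zero. -/
def ext (d : ℕ) (m : Fin d → ℕ) : ℕ → ℕ := fun t => if h : t < d then m ⟨t, h⟩ else 0

lemma ext_coe {d : ℕ} (m : Fin d → ℕ) (k : Fin d) : ext d m (k : ℕ) = m k := by
  simp [ext]

/-- The additive map sending block lengths to the tuple of prefix sums prescribed by `π`. -/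
def Amap (d : ℕ) (π : Equiv.Perm (Fin d)) : (Fin d → ℕ) →+ (Fin d → ℕ) where
  toFun m := fun i => ∑ t ∈ Finset.range ((π.symm i : ℕ) + 1), ext d m t
  map_zero' := by funext i; simp [ext]
  map_add' m₁ m₂ := by
    funext i
    simp only [Pi.add_apply, ← Finset.sum_add_distrib]
    refine Finset.sum_congr rfl fun t _ => ?_
    by_cases h : t < d <;> simp [ext, h]

lemma sum_ext {d : ℕ} (m : Fin d → ℕ) : ∑ t ∈ Finset.range d, ext d m t = ∑ k, m k := by
  rw [← Fin.sum_univ_eq_sum_range]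
  exact Finset.sum_congr rfl fun k _ => ext_coe m k

lemma sup_Amap (d : ℕ) (π : Equiv.Perm (Fin d)) (m : Fin d → ℕ) :
    Finset.univ.sup (Amap d π m) = ∑ t ∈ Finset.range d, ext d m t := by
  apply le_antisymm
  · refine Finset.sup_le fun i _ => ?_
    show ∑ t ∈ Finset.range ((π.symm i : ℕ) + 1), ext d m t ≤ _
    refine Finset.sum_le_sum_of_subset (Finset.range_subset_range.2 ?_)
    have := (π.symm i).isLt
    omega
  · rcases Nat.eq_zero_or_pos d with rfl | hd
    · simp
    · have hi : (π ⟨d - 1, by omega⟩ : Fin d) ∈ (Finset.univ : Finset (Fin d)) :=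
        Finset.mem_univ _
      refine le_trans ?_ (Finset.le_sup hi)
      show _ ≤ ∑ t ∈ Finset.range ((π.symm (π ⟨d - 1, by omega⟩) : ℕ) + 1), ext d m t
      rw [Equiv.symm_apply_apply]
      show ∑ t ∈ Finset.range d, ext d m t ≤ ∑ t ∈ Finset.range (d - 1 + 1), ext d m t
      have : d - 1 + 1 = d := by omega
      rw [this]

/-- The list of blocks (length, letter) determined by `π` and block lengths `m`. -/
def blocks (d : ℕ) (π : Equiv.Perm (Fin d)) (m : Fin d → ℕ) : List (ℕ × (Fin d → Bool)) :=
  List.ofFn fun k : Fin d => (m k, fun i => decide ((k : ℕ) < (π.symm i : ℕ) + 1))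

lemma length_wordOf_blocks (d : ℕ) (π : Equiv.Perm (Fin d)) (m : Fin d → ℕ) :
    (wordOf (blocks d π m)).length = ∑ t ∈ Finset.range d, ext d m t := by
  rw [length_wordOf, blocks, List.map_ofFn, sum_ext]
  rw [List.sum_ofFn]
  rfl

lemma padRep_Amap (d : ℕ) (π : Equiv.Perm (Fin d)) (m : Fin d → ℕ) :
    padRep d (Amap d π m) = wordOf (blocks d π m) := by
  have hlen2 := length_wordOf_blocks d π m
  have hlen1 : (padRep d (Amap d π m)).length = ∑ t ∈ Finset.range d, ext d m t := by
    simp only [padRep, List.length_ofFn, sup_Amap]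
  apply List.ext_getElem (by rw [hlen1, hlen2])
  intro j h1 h2
  simp only [padRep]
  rw [List.getElem_ofFn, getElem_wordOf]
  funext i
  have hj : j < (List.map Prod.fst (blocks d π m)).sum := by
    rw [blocks, List.map_ofFn, List.sum_ofFn]
    show j < ∑ k : Fin d, m k
    rw [← sum_ext]
    rw [hlen2] at h2
    exact h2
  have hpm := pick_map (fun g : Fin d → Bool => g i) (blocks d π m) j hj
  have hmap : (blocks d π m).map (fun p => (p.1, p.2 i))
      = List.ofFn fun k : Fin d => (ext d m (k : ℕ), decide ((k : ℕ) < (π.symm i : ℕ) + 1)) := by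
    rw [blocks, List.map_ofFn]
    congr 1
    funext k
    show (m k, decide ((k : ℕ) < (π.symm i : ℕ) + 1)) = _
    rw [ext_coe]
  have hj' : j < ∑ t ∈ Finset.range d, ext d m t := by rw [hlen2] at h2; exact h2
  rw [hmap, pick_ofFn_decide d (ext d m) ((π.symm i : ℕ) + 1) j hj'] at hpm
  have hmin : min ((π.symm i : ℕ) + 1) d = (π.symm i : ℕ) + 1 := by
    have := (π.symm i).isLt; omega
  rw [hmin] at hpm
  have hA : (Amap d π) m i = ∑ t ∈ Finset.range ((π.symm i : ℕ) + 1), ext d m t := rfl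
  rw [hA]
  simpa using hpm


lemma Amap_surj {d : ℕ} (π : Equiv.Perm (Fin d)) (v : Fin d → ℕ)
    (hmono : Monotone (v ∘ π)) : ∃ m, Amap d π m = v := by
  refine ⟨fun k => v (π k) - (if h : (k : ℕ) = 0 then 0 else v (π ⟨(k : ℕ) - 1, by omega⟩)), ?_⟩
  set m : Fin d → ℕ := fun k =>
    v (π k) - (if h : (k : ℕ) = 0 then 0 else v (π ⟨(k : ℕ) - 1, by omega⟩)) with hm
  have key : ∀ n (h : n < d), ∑ t ∈ Finset.range (n + 1), ext d m t = v (π ⟨n, h⟩) := by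
    intro n
    induction n with
    | zero =>
      intro h
      rw [zero_add, Finset.sum_range_one]
      simp only [ext, hm]
      rw [dif_pos h]
      simp
    | succ n ih =>
      intro h
      rw [Finset.sum_range_succ, ih (by omega)]
      have hext : ext d m (n + 1) = v (π ⟨n + 1, h⟩) - v (π ⟨n, by omega⟩) := by
        simp only [ext, dif_pos h, hm]
        simp
      rw [hext]
      have hle : v (π ⟨n, by omega⟩) ≤ v (π ⟨n + 1, h⟩) := by
        have : (⟨n, by omega⟩ : Fin d) ≤ ⟨n + 1, h⟩ := by
          simp [Fin.le_def]
        exact hmono this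
      omega
  funext i
  have h1 : (Amap d π) m i = ∑ t ∈ Finset.range ((π.symm i : ℕ) + 1), ext d m t := rfl
  rw [h1, key (π.symm i : ℕ) (π.symm i).isLt]
  have : (⟨(π.symm i : ℕ), (π.symm i).isLt⟩ : Fin d) = π.symm i := Fin.eta _ _
  rw [this, Equiv.apply_symm_apply]

lemma padRep_le {d : ℕ} {v v' : Fin d → ℕ} (h : padRep d v = padRep d v') (i : Fin d) :
    v' i ≤ v i := by
  by_contra hlt
  push_neg at hlt
  have hlen : Finset.univ.sup v = Finset.univ.sup v' := by
    have := congrArg List.length h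
    simpa [padRep] using this
  have hj : v i < Finset.univ.sup v' := lt_of_lt_of_le hlt (Finset.le_sup (Finset.mem_univ i))
  have hj1 : v i < (padRep d v).length := by
    simp only [padRep, List.length_ofFn]
    omega
  have := List.getElem_of_eq h hj1
  simp only [padRep, List.getElem_ofFn] at this
  have := congrFun this i
  simp only [decide_eq_decide] at this
  omega

lemma padRep_inj {d : ℕ} {v v' : Fin d → ℕ} (h : padRep d v = padRep d v') : v = v' := by
  funext i
  exact le_antisymm (padRep_le h.symm i) (padRep_le h i)

lemma apRep_iterate {Q : Type} [Fintype Q] [DecidableEq Q] (f : Q → Q) (q q' : Q) :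
    ∃ (ι : Type) (_ : Fintype ι) (a p : ι → ℕ),
      {n : ℕ | f^[n] q = q'} = ⋃ r, AP (a r) (p r) := by
  obtain ⟨k₁, k₂, hne, heq⟩ := Fintype.exists_ne_map_eq_of_card_lt
    (fun k : Fin (Fintype.card Q + 1) => f^[(k : ℕ)] q) (by simp)
  wlog hlt : (k₁ : ℕ) < (k₂ : ℕ) generalizing k₁ k₂
  · exact this k₂ k₁ hne.symm heq.symm (by have h : (k₁:ℕ) ≠ (k₂:ℕ) := fun h => hne (Fin.ext h); omega)
  set i := (k₁ : ℕ)
  set j := (k₂ : ℕ)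
  set p := j - i with hp
  have hppos : 0 < p := by omega
  have period : ∀ n, i ≤ n → f^[n + p] q = f^[n] q := by
    intro n hn
    have h1 : n + p = (n - i) + j := by omega
    have h2 : n = (n - i) + i := by omega
    rw [h1, Function.iterate_add_apply, ← heq, ← Function.iterate_add_apply, ← h2]
  refine ⟨{c : Fin j // f^[(c : ℕ)] q = q'}, inferInstance,
    fun c => (c.1 : ℕ), fun c => if (c.1 : ℕ) < i then 0 else p, ?_⟩
  ext n
  simp only [Set.mem_setOf_eq, Set.mem_iUnion]
  constructor
  · intro hn
    induction n using Nat.strong_induction_on with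
    | _ n IH =>
      by_cases hnj : n < j
      · exact ⟨⟨⟨n, hnj⟩, hn⟩, 0, by simp⟩
      · push_neg at hnj
        have hni : i ≤ n - p := by omega
        have hstep : f^[n - p] q = q' := by
          rw [← period (n - p) hni]
          have : n - p + p = n := by omega
          rw [this]; exact hn
        obtain ⟨c, t, hc⟩ := IH (n - p) (by omega) hstep
        by_cases hci : (c.1 : ℕ) < i
        · simp only [if_pos hci, mul_zero, add_zero] at hc
          exact absurd (hc ▸ hni) (not_le.2 hci)
        · refine ⟨c, t + 1, ?_⟩
          simp only [if_neg hci] at hc ⊢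
          have hn' : n = (n - p) + p := by omega
          rw [hn', hc]; ring
  · rintro ⟨c, t, rfl⟩
    by_cases hci : (c.1 : ℕ) < i
    · simp only [if_pos hci, mul_zero, add_zero]
      exact c.2
    · simp only [if_neg hci]
      push_neg at hci
      induction t with
      | zero => simpa using c.2
      | succ t IH =>
        have : (c.1 : ℕ) + (t + 1) * p = ((c.1 : ℕ) + t * p) + p := by ring
        rw [this, period _ (by omega)]
        exact IH

lemma semiLinearSet_pi {e : ℕ} (S : Fin e → Set ℕ)
    (h : ∀ k, ∃ (ι : Type) (_ : Fintype ι) (a p : ι → ℕ), S k = ⋃ r, AP (a r) (p r)) :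
    SemiLinearSet e {m : Fin e → ℕ | ∀ k, m k ∈ S k} := by
  choose ι inst a p hS using h
  have : {m : Fin e → ℕ | ∀ k, m k ∈ S k} =
      ⋃ c : (k : Fin e) → ι k, {m : Fin e → ℕ | ∀ k, m k ∈ AP (a k (c k)) (p k (c k))} := by
    ext m
    simp only [Set.mem_setOf_eq, Set.mem_iUnion]
    constructor
    · intro hm
      have : ∀ k, ∃ r, m k ∈ AP (a k r) (p k r) := fun k => by
        have := hm k; rw [hS k] at this; exact Set.mem_iUnion.1 this
      exact ⟨fun k => (this k).choose, fun k => (this k).choose_spec⟩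
    · rintro ⟨c, hc⟩ k
      rw [hS k]
      exact Set.mem_iUnion.2 ⟨c k, hc k⟩
  rw [this]
  exact semiLinearSet_iUnion _ fun c => semiLinearSet_of_linear (linearSet_pi _ _)

theorem part1 (d : ℕ) (X : Set (Fin d → ℕ)) (h : OneRecognizable d X) :
    SemiLinearSet d X := by
  obtain ⟨Q, instQ, M, hM⟩ := h
  haveI := instQ
  haveI : DecidableEq Q := Classical.decEq Q
  have hmem : ∀ v, v ∈ X ↔ padRep d v ∈ M.accepts := by
    intro v
    rw [hM]
    constructor
    · intro hv; exact ⟨v, hv, rfl⟩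
    · rintro ⟨v', hv', he⟩
      rw [padRep_inj he]
      exact hv'
  set ℓ : Equiv.Perm (Fin d) → Fin d → (Fin d → Bool) :=
    fun π k => fun i => decide ((k : ℕ) < (π.symm i : ℕ) + 1) with hℓ
  have hMset : ∀ π : Equiv.Perm (Fin d),
      SemiLinearSet d {m | wordOf (blocks d π m) ∈ M.accepts} := by
    intro π
    have hGfold : ∀ m : Fin d → ℕ, M.eval (wordOf (blocks d π m)) =
        (List.ofFn (fun k : Fin d => fun t =>
          (fun u => M.step u (ℓ π k))^[m k] t)).foldl (fun t g => g t) M.start := by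
      intro m
      show M.evalFrom M.start (wordOf (blocks d π m)) = _
      rw [evalFrom_wordOf]
      have hmap : (List.ofFn (fun k : Fin d => fun t =>
            (fun u => M.step u (ℓ π k))^[m k] t))
          = (blocks d π m).map
              (fun p : ℕ × (Fin d → Bool) => fun t => (fun u => M.step u p.2)^[p.1] t) := by
        rw [blocks, List.map_ofFn]
        rfl
      rw [hmap, List.foldl_map]
    have hchar : ∀ m : Fin d → ℕ, wordOf (blocks d π m) ∈ M.accepts ↔
        ∃ q : Fin (d + 1) → Q, q 0 = M.start ∧ q (Fin.last d) ∈ M.accept ∧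
          ∀ k : Fin d, (fun u => M.step u (ℓ π k))^[m k] (q k.castSucc) = q k.succ := by
      intro m
      constructor
      · intro hacc
        have : (List.ofFn (fun k : Fin d => fun t =>
            (fun u => M.step u (ℓ π k))^[m k] t)).foldl (fun t g => g t) M.start
            = M.eval (wordOf (blocks d π m)) := (hGfold m).symm
        obtain ⟨q, h0, hl, hst⟩ := (foldl_chain d _ M.start _).1 this
        exact ⟨q, h0, hl ▸ hacc, hst⟩
      · rintro ⟨q, h0, hl, hst⟩
        have : (List.ofFn (fun k : Fin d => fun t =>
            (fun u => M.step u (ℓ π k))^[m k] t)).foldl (fun t g => g t) M.start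
            = q (Fin.last d) := (foldl_chain d _ M.start _).2 ⟨q, h0, rfl, hst⟩
        show M.eval _ ∈ M.accept
        rw [hGfold m, this]
        exact hl
    have hset : {m : Fin d → ℕ | wordOf (blocks d π m) ∈ M.accepts} =
        ⋃ q : Fin (d + 1) → Q, {m : Fin d → ℕ | q 0 = M.start ∧ q (Fin.last d) ∈ M.accept ∧
          ∀ k : Fin d, m k ∈ {n : ℕ | (fun u => M.step u (ℓ π k))^[n] (q k.castSucc) = q k.succ}} := by
      ext m
      rw [Set.mem_setOf_eq, hchar m, Set.mem_iUnion]
      rfl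
    rw [hset]
    refine semiLinearSet_iUnion _ fun q => ?_
    by_cases hq : q 0 = M.start ∧ q (Fin.last d) ∈ M.accept
    · have : {m : Fin d → ℕ | q 0 = M.start ∧ q (Fin.last d) ∈ M.accept ∧
          ∀ k : Fin d, m k ∈ {n : ℕ | (fun u => M.step u (ℓ π k))^[n] (q k.castSucc) = q k.succ}}
          = {m : Fin d → ℕ | ∀ k : Fin d,
              m k ∈ {n : ℕ | (fun u => M.step u (ℓ π k))^[n] (q k.castSucc) = q k.succ}} := by
        ext m
        simp [hq.1, hq.2]
      rw [this]
      exact semiLinearSet_pi _ fun k => apRep_iterate _ _ _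
    · have : {m : Fin d → ℕ | q 0 = M.start ∧ q (Fin.last d) ∈ M.accept ∧
          ∀ k : Fin d, m k ∈ {n : ℕ | (fun u => M.step u (ℓ π k))^[n] (q k.castSucc) = q k.succ}}
          = ∅ := by
        ext m
        simp only [Set.mem_setOf_eq, Set.mem_empty_iff_false, iff_false]
        intro hc
        exact hq ⟨hc.1, hc.2.1⟩
      rw [this]
      exact semiLinearSet_empty d
  have hX : X = ⋃ π : Equiv.Perm (Fin d),
      (Amap d π) '' {m | wordOf (blocks d π m) ∈ M.accepts} := by
    ext v
    rw [Set.mem_iUnion]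
    constructor
    · intro hv
      obtain ⟨m, hm⟩ := Amap_surj (Tuple.sort v) v (Tuple.monotone_sort v)
      refine ⟨Tuple.sort v, m, ?_, hm⟩
      show wordOf (blocks d (Tuple.sort v) m) ∈ M.accepts
      rw [← padRep_Amap, hm]
      exact (hmem v).1 hv
    · rintro ⟨π, m, hmm, rfl⟩
      refine (hmem _).2 ?_
      rw [padRep_Amap]
      exact hmm
  rw [hX]
  exact semiLinearSet_iUnion _ fun π => semiLinearSet_image _ (hMset π)

theorem part2 : SemiLinearSet 2 {x : Fin 2 → ℕ | ∃ n : ℕ, x = ![n, 2 * n]} := by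
  apply semiLinearSet_of_linear
  refine ⟨0, 1, fun _ => ![1, 2], ?_⟩
  ext x
  simp only [Set.mem_setOf_eq]
  constructor
  · rintro ⟨n, rfl⟩
    refine ⟨fun _ => n, ?_⟩
    funext i
    rw [Pi.add_apply, Finset.sum_apply, Fin.sum_univ_one]
    fin_cases i <;> simp [mul_comm]
  · rintro ⟨n, rfl⟩
    refine ⟨n 0, ?_⟩
    funext i
    rw [Pi.add_apply, Finset.sum_apply, Fin.sum_univ_one]
    fin_cases i <;> simp [mul_comm]

def A2 : Fin 2 → Bool := fun _ => true
def B2 : Fin 2 → Bool := fun i => decide ((i : ℕ) = 1)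

lemma A2_ne_B2 : A2 ≠ B2 := by
  intro h
  have := congrFun h 0
  simp [A2, B2] at this

lemma padRep_pair (n : ℕ) :
    padRep 2 ![n, 2 * n] = List.replicate n A2 ++ List.replicate n B2 := by
  have hsup : Finset.univ.sup ![n, 2 * n] = 2 * n := by
    apply le_antisymm
    · refine Finset.sup_le fun i _ => ?_
      fin_cases i <;> simp <;> omega
    · have := Finset.le_sup (f := ![n, 2 * n]) (Finset.mem_univ (1 : Fin 2))
      simpa using this
  apply List.ext_getElem
  · simp only [padRep, List.length_ofFn, hsup, List.length_append, List.length_replicate]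
    omega
  intro j h1 h2
  have hj : j < 2 * n := by simpa [padRep, hsup] using h1
  simp only [padRep]
  rw [List.getElem_ofFn]
  by_cases hjn : j < n
  · rw [List.getElem_append_left (by simpa using hjn), List.getElem_replicate]
    funext i
    fin_cases i <;> simp [A2] <;> first | omega | simpa using hjn | exact decide_eq_true hjn
  · rw [List.getElem_append_right (by simpa using Nat.not_lt.1 hjn), List.getElem_replicate]
    funext i
    fin_cases i <;> simp [B2] <;> first | omega | simpa using hjn | exact decide_eq_false hjn

lemma rep_append_lt_absurd {α : Type*} {x y : α} (hxy : x ≠ y) {p q p' q' : ℕ}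
    (hq : 0 < q) (hpp : p < p')
    (h : List.replicate p x ++ List.replicate q y = List.replicate p' x ++ List.replicate q' y) :
    False := by
  have h1 : p < (List.replicate p x ++ List.replicate q y).length := by simp; omega
  have hg := List.getElem_of_eq h h1
  rw [List.getElem_append_right (by simp)] at hg
  rw [List.getElem_append_left (by simpa using hpp)] at hg
  simp only [List.length_replicate, Nat.sub_self, List.getElem_replicate] at hg
  exact hxy hg.symm

theorem part3 : ¬ OneRecognizable 2 {x : Fin 2 → ℕ | ∃ n : ℕ, x = ![n, 2 * n]} := by
  rintro ⟨Q, instQ, M, hM⟩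
  haveI := instQ
  have key : ∀ c₁ c₂ : ℕ, c₁ < c₂ →
      M.evalFrom M.start (List.replicate c₁ A2) = M.evalFrom M.start (List.replicate c₂ A2) →
      False := by
    intro c₁ c₂ hlt heq
    have hacc2 : padRep 2 ![c₂, 2 * c₂] ∈ M.accepts := by
      rw [hM]
      exact ⟨![c₂, 2 * c₂], ⟨c₂, rfl⟩, rfl⟩
    have hpump : (List.replicate c₁ A2 ++ List.replicate c₂ B2) ∈ M.accepts := by
      show M.evalFrom M.start _ ∈ M.accept
      rw [DFA.evalFrom_of_append, heq, ← DFA.evalFrom_of_append, ← padRep_pair]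
      exact hacc2
    rw [hM] at hpump
    obtain ⟨v, ⟨n, rfl⟩, hw⟩ := hpump
    rw [padRep_pair] at hw
    have hlen := congrArg List.length hw
    simp only [List.length_append, List.length_replicate] at hlen
    have hn : 0 < n := by omega
    rcases Nat.lt_trichotomy c₁ n with hc | hc | hc
    · exact rep_append_lt_absurd A2_ne_B2 (by omega) hc hw
    · omega
    · exact rep_append_lt_absurd A2_ne_B2 hn hc hw.symm
  obtain ⟨k₁, k₂, hne, heq⟩ := Fintype.exists_ne_map_eq_of_card_lt
    (fun k : Fin (Fintype.card Q + 1) => M.evalFrom M.start (List.replicate (k : ℕ) A2))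
    (by simp)
  have hvne : (k₁ : ℕ) ≠ (k₂ : ℕ) := fun h => hne (Fin.ext h)
  rcases Nat.lt_trichotomy (k₁ : ℕ) (k₂ : ℕ) with hlt | hc | hlt
  · exact key _ _ hlt heq
  · exact hvne hc
  · exact key _ _ hlt heq.symm

end S17

theorem stmt_17 :
    (∀ (d : ℕ) (X : Set (Fin d → ℕ)), OneRecognizable d X → SemiLinearSet d X) ∧
    SemiLinearSet 2 {x : Fin 2 → ℕ | ∃ n : ℕ, x = ![n, 2 * n]} ∧
    ¬ OneRecognizable 2 {x : Fin 2 → ℕ | ∃ n : ℕ, x = ![n, 2 * n]} := by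
  exact ⟨S17.part1, S17.part2, S17.part3⟩
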